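/- Let ξ ∈ ℝ^d be nonzero, B a symmetric matrix, ψ(v) = ⟨ξ,v⟩ + vᵀBv, ζ = 4‖B‖/|ξ|, and 0 < ε < ζ⁻¹. If v maximizes ψ over B̄(0,ε) and w = ε|ξ|⁻¹ξ, then ⟨w, v⟩ ≥ ε² − (ζ/2)ε²|v−w|, and consequently |v−w|² ≤ ζ ε² |v−w|. -/

import Mathlib

open scoped RealInnerProductSpace

theorem stmt2 {d : ℕ} (B : Matrix (Fin d) (Fin d) ℝ) (hB : B.IsSymm)
    (ξ : EuclideanSpace ℝ (Fin d)) (hξ : ξ ≠ 0)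
    (ψ : EuclideanSpace ℝ (Fin d) → ℝ)
    (hψ : ∀ v, ψ v = ⟪ξ, v⟫ + ∑ i, ∑ j, v i * B i j * v j)
    (ζ : ℝ) (hζ : ζ = 4 * ‖Matrix.toEuclideanCLM (𝕜 := ℝ) B‖ / ‖ξ‖)
    (ε : ℝ) (hε : 0 < ε) (hεζ : ε < ζ⁻¹)
    (v : EuclideanSpace ℝ (Fin d)) (hv : v ∈ Metric.closedBall 0 ε)
    (hmax : IsMaxOn ψ (Metric.closedBall 0 ε) v)
    (w : EuclideanSpace ℝ (Fin d)) (hw : w = (ε / ‖ξ‖) • ξ) :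
    ⟪w, v⟫ ≥ ε ^ 2 - (ζ / 2) * ε ^ 2 * ‖v - w‖ ∧
      ‖v - w‖ ^ 2 ≤ ζ * ε ^ 2 * ‖v - w‖ := by
  set M := Matrix.toEuclideanCLM (𝕜 := ℝ) B with hM
  have hξn : (0:ℝ) < ‖ξ‖ := norm_pos_iff.mpr hξ
  have hQ : ∀ u x : EuclideanSpace ℝ (Fin d),
      ⟪u, M x⟫ = ∑ i, ∑ j, u i * B i j * x j := by
    intro u x
    have h : ∀ i, (M x) i = ∑ j, B i j * x j := by
      intro i
      have := Matrix.ofLp_toEuclideanCLM (𝕜 := ℝ) B x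
      have h2 := congrFun this i
      exact h2
    simp [PiLp.inner_apply, h, Finset.mul_sum, mul_assoc, RCLike.inner_apply]
    refine Finset.sum_congr rfl (fun i _ => ?_); rw [Finset.sum_mul]
    exact Finset.sum_congr rfl (fun j _ => by ring)
  -- norms
  have hwn : ‖w‖ = ε := by
    rw [hw, norm_smul]
    rw [Real.norm_eq_abs, abs_of_pos (div_pos hε hξn)]
    field_simp
  have hvn : ‖v‖ ≤ ε := by simpa using hv
  have hwball : w ∈ Metric.closedBall (0 : EuclideanSpace ℝ (Fin d)) ε := by
    simp [hwn.le]
  -- maximality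
  have hmax' : ψ w ≤ ψ v := hmax hwball
  rw [hψ, hψ] at hmax'
  rw [← hQ w w, ← hQ v v] at hmax'
  -- bilinear bound
  have hbound : ∀ a b : EuclideanSpace ℝ (Fin d), ⟪a, M b⟫ ≤ ‖M‖ * ‖a‖ * ‖b‖ := by
    intro a b
    calc ⟪a, M b⟫ ≤ ‖a‖ * ‖M b‖ := real_inner_le_norm a (M b)
      _ ≤ ‖a‖ * (‖M‖ * ‖b‖) := by
          exact mul_le_mul_of_nonneg_left (M.le_opNorm b) (norm_nonneg a)
      _ = ‖M‖ * ‖a‖ * ‖b‖ := by ring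
  have hQdiff : ⟪w, M w⟫ - ⟪v, M v⟫ ≥ - (2 * ε * ‖M‖ * ‖v - w‖) := by
    have key : ⟪w, M w⟫ - ⟪v, M v⟫ = ⟪w - v, M w⟫ + ⟪v, M (w - v)⟫ := by
      simp only [inner_sub_left, map_sub, inner_sub_right]; ring
    have h1 : ⟪v - w, M w⟫ ≤ ‖M‖ * ‖v - w‖ * ε := by
      have := hbound (v - w) w; rwa [hwn] at this
    have h2 : ⟪v, M (v - w)⟫ ≤ ‖M‖ * ε * ‖v - w‖ := by
      have := hbound v (v - w)
      calc ⟪v, M (v - w)⟫ ≤ ‖M‖ * ‖v‖ * ‖v - w‖ := this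
        _ ≤ ‖M‖ * ε * ‖v - w‖ := by
            apply mul_le_mul_of_nonneg_right _ (norm_nonneg _)
            exact mul_le_mul_of_nonneg_left hvn (norm_nonneg M)
    have e1 : ⟪w - v, M w⟫ = - ⟪v - w, M w⟫ := by
      rw [show w - v = -(v - w) by abel, inner_neg_left]
    have e2 : ⟪v, M (w - v)⟫ = - ⟪v, M (v - w)⟫ := by
      rw [show w - v = -(v - w) by abel, map_neg, inner_neg_right]
    rw [key, e1, e2]
    nlinarith
  -- ⟪ξ, v⟫ lower bound
  have hξv : ⟪ξ, v⟫ ≥ ε * ‖ξ‖ - 2 * ε * ‖M‖ * ‖v - w‖ := by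
    have hξw : ⟪ξ, w⟫ = ε * ‖ξ‖ := by
      rw [hw, real_inner_smul_right, real_inner_self_eq_norm_sq]
      field_simp
    nlinarith [hmax']
  obtain ⟨k, hk⟩ : ∃ k : ℝ, k = ‖M‖ := ⟨‖M‖, rfl⟩
  rw [← hk] at hζ hQdiff hξv
  have hwv : ⟪w, v⟫ ≥ ε ^ 2 - (ζ / 2) * ε ^ 2 * ‖v - w‖ := by
    have hin : ⟪w, v⟫ = (ε / ‖ξ‖) * ⟪ξ, v⟫ := by rw [hw, real_inner_smul_left]
    have hmul := mul_le_mul_of_nonneg_left (sub_nonneg.mpr hξv)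
      (le_of_lt (div_pos hε hξn) : (0:ℝ) ≤ ε / ‖ξ‖)
    have hid1 : (ε / ‖ξ‖) * (ε * ‖ξ‖) = ε ^ 2 := by field_simp [hξn.ne']
    have hid2 : (ε / ‖ξ‖) * (2 * ε * k * ‖v - w‖) = (ζ / 2) * ε ^ 2 * ‖v - w‖ := by
      rw [hζ]; field_simp [hξn.ne']; ring
    rw [hin]
    nlinarith [hmul]
  refine ⟨hwv, ?_⟩
  have hsq : ‖v - w‖ ^ 2 = ‖v‖ ^ 2 - 2 * ⟪w, v⟫ + ‖w‖ ^ 2 := by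
    rw [norm_sub_sq_real, real_inner_comm]
  have hv2 : ‖v‖ ^ 2 ≤ ε ^ 2 := pow_le_pow_left₀ (norm_nonneg v) hvn 2
  rw [hwn] at hsq
  linarith [hsq, hwv, hv2]
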